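/- Let P(λ₁,…,λ_m) be a polynomial of total degree 2m in m variables that is at most quadratic in each individual variable. If d > m, then the coefficient of λ^d in P(λ,…,λ) equals the sum over r from 1 to ⌊d/2⌋ of (−1)^{r+1} 2^{−r} times the sum over all index sets i₁<…<i_r of the coefficient of λ^{d−2r} in (∂^{2r}P/∂λ_{i₁}²⋯∂λ_{i_r}²)(λ,…,λ). -/

import Mathlib

open MvPolynomial Polynomial

/-- Specialize all variables of a multivariable polynomial to a single variable `λ`. -/
noncomputable def diagSpec {m : ℕ} (P : MvPolynomial (Fin m) ℝ) : Polynomial ℝ :=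
  MvPolynomial.aeval (fun _ : Fin m => Polynomial.X) P

/-- Apply the second partial derivative `∂²/∂λᵢ²` for each `i` in the finset `s`. -/
noncomputable def secondDerivs {m : ℕ} (s : Finset (Fin m)) (P : MvPolynomial (Fin m) ℝ) :
    MvPolynomial (Fin m) ℝ :=
  s.toList.foldr (fun i Q => MvPolynomial.pderiv i (MvPolynomial.pderiv i Q)) P

noncomputable def Tl {m : ℕ} (l : List (Fin m)) : Fin m →₀ ℕ :=
  (l.map fun i => Finsupp.single i (2:ℕ)).sum

lemma Tl_cons {m : ℕ} (i : Fin m) (t : List (Fin m)) :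
    Tl (i :: t) = Finsupp.single i 2 + Tl t := by simp [Tl]

lemma Tl_apply {m : ℕ} (l : List (Fin m)) (hl : l.Nodup) (j : Fin m) :
    Tl l j = if j ∈ l then 2 else 0 := by
  induction l with
  | nil => simp [Tl]
  | cons i t ih =>
    rw [List.nodup_cons] at hl
    rw [Tl_cons]
    simp only [Finsupp.add_apply, Finsupp.single_apply, ih hl.2, List.mem_cons]
    by_cases h2 : j ∈ t
    · have h1 : ¬ i = j := fun h => hl.1 (h ▸ h2)
      simp [h1, h2]
    · by_cases h1 : i = j
      · simp [h1, h2]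
      · rw [if_neg h1, if_neg h2, if_neg (by rintro (rfl | hh); exact h1 rfl; exact h2 hh)]

lemma diagSpec_monomial {m : ℕ} (α : Fin m →₀ ℕ) (c : ℝ) :
    diagSpec (monomial α c) = Polynomial.C c * Polynomial.X ^ (∑ i, α i) := by
  rw [diagSpec, MvPolynomial.aeval_monomial]
  rw [Finsupp.prod_fintype _ _ (fun i => pow_zero _)]
  rw [Finset.prod_pow_eq_pow_sum]
  rfl

lemma diagSpec_monomial_coeff {m : ℕ} (α : Fin m →₀ ℕ) (c : ℝ) (n : ℕ) :
    (diagSpec (monomial α c)).coeff n = if (∑ i, α i) = n then c else 0 := by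
  rw [diagSpec_monomial, Polynomial.coeff_C_mul, Polynomial.coeff_X_pow]
  split <;> split <;> simp_all

lemma foldr_pderiv2_monomial {m : ℕ} (l : List (Fin m)) (hl : l.Nodup)
    (α : Fin m →₀ ℕ) (hα : ∀ i ∈ l, α i ≤ 2) (c : ℝ) :
    l.foldr (fun i Q => MvPolynomial.pderiv i (MvPolynomial.pderiv i Q)) (monomial α c) =
      if ∀ i ∈ l, α i = 2 then monomial (α - Tl l) ((2:ℝ) ^ l.length * c) else 0 := by
  induction l with
  | nil => simp [Tl]
  | cons i t ih =>
    rw [List.nodup_cons] at hl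
    have hit : i ∉ t := hl.1
    rw [List.foldr_cons, ih hl.2 (fun j hj => hα j (List.mem_cons_of_mem i hj))]
    by_cases ht : ∀ j ∈ t, α j = 2
    · simp only [if_pos ht]
      have hβi : (α - Tl t) i = α i := by
        rw [Finsupp.tsub_apply, Tl_apply t hl.2, if_neg hit]; omega
      rw [MvPolynomial.pderiv_monomial, MvPolynomial.pderiv_monomial]
      have hai := hα i (List.mem_cons_self)
      have hexp : α - Tl t - Finsupp.single i 1 - Finsupp.single i 1 = α - Tl (i :: t) := by
        ext j
        simp only [Finsupp.tsub_apply, Tl_cons, Finsupp.add_apply, Finsupp.single_apply]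
        by_cases hij : i = j <;> simp [hij] <;> omega
      interval_cases h : α i
      · rw [if_neg (by intro hall; have := hall i (List.mem_cons_self); omega)]
        rw [hβi]
        norm_num
      · rw [if_neg (by intro hall; have := hall i (List.mem_cons_self); omega)]
        have h2 : ((α - Tl t - Finsupp.single i 1) : Fin m →₀ ℕ) i = 0 := by
          rw [Finsupp.tsub_apply, hβi, Finsupp.single_apply, if_pos rfl]
        rw [h2]
        norm_num
      · rw [if_pos (by intro j hj; rcases List.mem_cons.1 hj with rfl | hj; exact h; exact ht j hj)]
        have h2 : ((α - Tl t - Finsupp.single i 1) : Fin m →₀ ℕ) i = 1 := by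
          rw [Finsupp.tsub_apply, hβi, Finsupp.single_apply, if_pos rfl]
        rw [hexp, hβi, h2]
        congr 1
        rw [List.length_cons]
        push_cast
        ring
    · rw [if_neg ht, if_neg (by intro hall; exact ht fun j hj => hall j (List.mem_cons_of_mem i hj))]
      simp

lemma coeff_secondDerivs_monomial {m : ℕ} (s : Finset (Fin m)) (α : Fin m →₀ ℕ)
    (hα : ∀ i, α i ≤ 2) (c : ℝ) (n : ℕ) :
    (diagSpec (secondDerivs s (monomial α c))).coeff n =
      if (∀ i ∈ s, α i = 2) ∧ (∑ i, α i) = n + 2 * s.card then (2:ℝ) ^ s.card * c else 0 := by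
  rw [secondDerivs, foldr_pderiv2_monomial s.toList s.nodup_toList α (fun i _ => hα i) c]
  by_cases hall : ∀ i ∈ s, α i = 2
  · have hall' : ∀ i ∈ s.toList, α i = 2 := by simpa using hall
    rw [if_pos hall', diagSpec_monomial_coeff, Finset.length_toList]
    have hpt : ∀ j, (α - Tl s.toList) j + (if j ∈ s then 2 else 0) = α j := by
      intro j
      rw [Finsupp.tsub_apply, Tl_apply _ s.nodup_toList]
      simp only [Finset.mem_toList]
      by_cases hj : j ∈ s
      · have := hall j hj
        simp [hj]
        omega
      · simp [hj]
    have hsum : (∑ j, (α - Tl s.toList) j) + 2 * s.card = ∑ j, α j := by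
      calc (∑ j, (α - Tl s.toList) j) + 2 * s.card
          = (∑ j, (α - Tl s.toList) j) + ∑ j : Fin m, (if j ∈ s then 2 else 0) := by
            rw [Finset.sum_ite_mem, Finset.univ_inter, Finset.sum_const, smul_eq_mul, mul_comm]
        _ = ∑ j, ((α - Tl s.toList) j + if j ∈ s then 2 else 0) := by
            rw [Finset.sum_add_distrib]
        _ = ∑ j, α j := by exact Finset.sum_congr rfl fun j _ => hpt j
    by_cases hn : (∑ j, (α - Tl s.toList) j) = n
    · rw [if_pos hn, if_pos ⟨hall, by omega⟩]
    · rw [if_neg hn, if_neg (by rintro ⟨-, h⟩; omega)]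
  · rw [if_neg (by intro h; exact hall fun i hi => h i (Finset.mem_toList.2 hi))]
    rw [if_neg (by rintro ⟨h, -⟩; exact hall h)]
    simp [diagSpec]

lemma alt_sum (a N : ℕ) (ha : 1 ≤ a) (haN : a ≤ N) :
    ∑ r ∈ Finset.Icc 1 N, (-1:ℝ)^(r+1) * (a.choose r : ℝ) = 1 := by
  have hsub : Finset.Icc 1 a ⊆ Finset.Icc 1 N := Finset.Icc_subset_Icc_right haN
  rw [← Finset.sum_subset hsub (fun r hr hr' => by
    simp only [Finset.mem_Icc] at hr hr'
    rw [Nat.choose_eq_zero_of_lt (by omega)]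
    simp)]
  have hint : ∑ r ∈ Finset.range (a+1), (-1:ℤ)^r * (a.choose r) = 0 := by
    rw [Int.alternating_sum_range_choose, if_neg (by omega)]
  have hins : Finset.range (a+1) = insert 0 (Finset.Icc 1 a) := by
    ext x; simp [Finset.mem_range, Finset.mem_Icc]; omega
  rw [hins, Finset.sum_insert (by simp)] at hint
  simp only [pow_zero, Nat.choose_zero_right, Nat.cast_one, one_mul] at hint
  have h2 : ∑ r ∈ Finset.Icc 1 a, (-1:ℤ)^r * (a.choose r) = -1 := by linarith
  have h3 := congrArg (fun z : ℤ => (z : ℝ)) h2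
  push_cast at h3
  calc ∑ r ∈ Finset.Icc 1 a, (-1:ℝ)^(r+1) * (a.choose r : ℝ)
      = -∑ r ∈ Finset.Icc 1 a, (-1:ℝ)^r * (a.choose r : ℝ) := by
        rw [← Finset.sum_neg_distrib]
        exact Finset.sum_congr rfl fun r _ => by ring
    _ = 1 := by rw [h3]; norm_num

lemma secondDerivs_sum {m : ℕ} (s : Finset (Fin m)) {ι : Type*} (t : Finset ι)
    (f : ι → MvPolynomial (Fin m) ℝ) :
    secondDerivs s (∑ x ∈ t, f x) = ∑ x ∈ t, secondDerivs s (f x) := by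
  unfold secondDerivs
  induction s.toList with
  | nil => simp
  | cons i l ih => simp only [List.foldr_cons, ih, map_sum]

lemma monomial_case {m : ℕ} (d : ℕ) (hd : m < d) (α : Fin m →₀ ℕ) (hα : ∀ i, α i ≤ 2) (c : ℝ) :
    (diagSpec (monomial α c)).coeff d =
      ∑ r ∈ Finset.Icc 1 (d / 2), (-1 : ℝ) ^ (r + 1) * ((2 : ℝ)⁻¹) ^ r *
        ∑ s ∈ (Finset.univ : Finset (Fin m)).powersetCard r,
          (diagSpec (secondDerivs s (monomial α c))).coeff (d - 2 * r) := by
  set A : Finset (Fin m) := Finset.univ.filter (fun i => α i = 2) with hA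
  set W := ∑ i, α i with hW
  have h2A : ∀ i ∈ A, α i = 2 := fun i hi => (Finset.mem_filter.1 hi).2
  have hAle : 2 * A.card ≤ W := by
    have h1 : ∑ i ∈ A, α i = 2 * A.card := by
      rw [Finset.sum_congr rfl h2A, Finset.sum_const, smul_eq_mul, mul_comm]
    calc 2 * A.card = ∑ i ∈ A, α i := h1.symm
      _ ≤ ∑ i, α i := Finset.sum_le_sum_of_subset (Finset.subset_univ A)
  have hWle : W ≤ m + A.card := by
    have h1 : ∀ i ∈ Finset.univ, α i ≤ 1 + (if i ∈ A then 1 else 0) := by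
      intro i _
      by_cases h : i ∈ A
      · simp [h, h2A i h]
      · have h2 : α i ≠ 2 := fun hc => h (Finset.mem_filter.2 ⟨Finset.mem_univ i, hc⟩)
        have := hα i
        simp [h]; omega
    calc W ≤ ∑ i : Fin m, (1 + if i ∈ A then 1 else 0) := Finset.sum_le_sum h1
      _ = m + A.card := by
        rw [Finset.sum_add_distrib, Finset.sum_const, Finset.sum_ite_mem,
          Finset.univ_inter, Finset.sum_const]
        simp
  have hinner : ∀ r ∈ Finset.Icc 1 (d/2), ∀ s ∈ (Finset.univ : Finset (Fin m)).powersetCard r,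
      (diagSpec (secondDerivs s (monomial α c))).coeff (d - 2*r)
        = if s ⊆ A ∧ W = d then (2:ℝ)^r * c else 0 := by
    intro r hr s hs
    rw [coeff_secondDerivs_monomial s α hα c]
    have hcard : s.card = r := (Finset.mem_powersetCard.1 hs).2
    simp only [Finset.mem_Icc] at hr
    have h2r : 2*r ≤ d := by omega
    have hiff : ((∀ i ∈ s, α i = 2) ∧ W = (d - 2*r) + 2*r) ↔ (s ⊆ A ∧ W = d) := by
      constructor
      · rintro ⟨h1, h2⟩
        have hWge : 2*r ≤ W := by
          have hs2 : ∑ i ∈ s, α i = 2 * r := by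
            rw [Finset.sum_congr rfl h1, Finset.sum_const, smul_eq_mul, mul_comm, hcard]
          calc 2*r = ∑ i ∈ s, α i := hs2.symm
            _ ≤ ∑ i, α i := Finset.sum_le_sum_of_subset (Finset.subset_univ s)
        exact ⟨fun i hi => Finset.mem_filter.2 ⟨Finset.mem_univ i, h1 i hi⟩, by omega⟩
      · rintro ⟨h1, h2⟩
        exact ⟨fun i hi => (Finset.mem_filter.1 (h1 hi)).2, by omega⟩
    rw [hcard, ← hW, if_congr hiff rfl rfl]
  rw [Finset.sum_congr rfl (fun r hr => by
    rw [Finset.sum_congr rfl (hinner r hr)])]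
  rw [diagSpec_monomial_coeff]
  by_cases hWd : W = d
  · rw [if_pos hWd]
    have hcount : ∀ r, ∑ s ∈ (Finset.univ : Finset (Fin m)).powersetCard r,
        (if s ⊆ A ∧ W = d then (2:ℝ)^r * c else 0) = (A.card.choose r : ℝ) * ((2:ℝ)^r * c) := by
      intro r
      simp only [hWd, and_true]
      have hfil : (Finset.univ.powersetCard r).filter (· ⊆ A) = A.powersetCard r := by
        ext u
        simp only [Finset.mem_filter, Finset.mem_powersetCard]
        constructor
        · rintro ⟨⟨-, h2⟩, h3⟩; exact ⟨h3, h2⟩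
        · rintro ⟨h1, h2⟩; exact ⟨⟨Finset.subset_univ u, h2⟩, h1⟩
      rw [← Finset.sum_filter, hfil, Finset.sum_const, Finset.card_powersetCard, nsmul_eq_mul]
    rw [Finset.sum_congr rfl (fun r _ => by rw [hcount r])]
    have ha1 : 1 ≤ A.card := by omega
    have ha2 : A.card ≤ d / 2 := by omega
    have hterm : ∀ r, (-1:ℝ)^(r+1) * ((2:ℝ)⁻¹)^r * ((A.card.choose r : ℝ) * ((2:ℝ)^r * c))
        = ((-1:ℝ)^(r+1) * (A.card.choose r : ℝ)) * c := by
      intro r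
      have h12 : ((2:ℝ)⁻¹)^r * (2:ℝ)^r = 1 := by
        rw [← mul_pow]; norm_num
      calc (-1:ℝ)^(r+1) * ((2:ℝ)⁻¹)^r * ((A.card.choose r : ℝ) * ((2:ℝ)^r * c))
          = ((-1:ℝ)^(r+1) * (A.card.choose r : ℝ)) * c * (((2:ℝ)⁻¹)^r * (2:ℝ)^r) := by ring
        _ = _ := by rw [h12, mul_one]
    rw [Finset.sum_congr rfl (fun r _ => hterm r), ← Finset.sum_mul, alt_sum A.card (d/2) ha1 ha2,
      one_mul]
  · rw [if_neg hWd]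
    simp [hWd]

/-- if `P` has total degree at most `2m`, is at most quadratic in each variable,
and `d > m`, then `[λ^d] P(λ,…,λ)` equals the stated alternating sum of coefficients of
diagonal specializations of iterated second derivatives. -/

theorem stmt0 (m d : ℕ) (P : MvPolynomial (Fin m) ℝ)
    (hdeg : P.totalDegree ≤ 2 * m)
    (hquad : ∀ i : Fin m, P.degreeOf i ≤ 2)
    (hd : m < d) :
    (diagSpec P).coeff d =
      ∑ r ∈ Finset.Icc 1 (d / 2), (-1 : ℝ) ^ (r + 1) * ((2 : ℝ)⁻¹) ^ r *
        ∑ s ∈ (Finset.univ : Finset (Fin m)).powersetCard r,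
          (diagSpec (secondDerivs s P)).coeff (d - 2 * r) := by
  have hα : ∀ α ∈ P.support, ∀ i, α i ≤ 2 := by
    intro α hαs i
    have := (MvPolynomial.degreeOf_lt_iff (n := i) (f := P) (d := 3) (by norm_num)).1
      (lt_of_le_of_lt (hquad i) (by norm_num)) α hαs
    omega
  conv_lhs => rw [MvPolynomial.as_sum P]
  rw [show diagSpec (∑ v ∈ P.support, monomial v (coeff v P))
      = ∑ v ∈ P.support, diagSpec (monomial v (coeff v P)) from map_sum _ _ _,
    Polynomial.finset_sum_coeff]
  have hrhs : ∀ r ∈ Finset.Icc 1 (d/2), ∀ s ∈ (Finset.univ : Finset (Fin m)).powersetCard r,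
      (diagSpec (secondDerivs s P)).coeff (d - 2*r)
        = ∑ v ∈ P.support, (diagSpec (secondDerivs s (monomial v (coeff v P)))).coeff (d - 2*r) := by
    intro r _ s _
    conv_lhs => rw [MvPolynomial.as_sum P]
    rw [secondDerivs_sum, show diagSpec (∑ v ∈ P.support, secondDerivs s (monomial v (coeff v P)))
      = ∑ v ∈ P.support, diagSpec (secondDerivs s (monomial v (coeff v P))) from map_sum _ _ _,
      Polynomial.finset_sum_coeff]
  rw [Finset.sum_congr rfl (fun v hv => monomial_case d hd v (hα v hv) (coeff v P)),
    Finset.sum_comm]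
  refine Finset.sum_congr rfl fun r hr => ?_
  rw [← Finset.mul_sum]
  congr 1
  rw [Finset.sum_comm]
  exact Finset.sum_congr rfl fun s hs => (hrhs r hr s hs).symm
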